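/- Let α be a nonnegative random variable with finite expectation and continuous CDF F, let T ≥ 0, c ≥ 0, k = 3T + c, r_H = α_H − k, and assume r_H > 0. Define the supplier's expected payoff U(r) = (2/3)·r·E[(α − k − r)⁺] for r ≥ 0. If r* maximizes U over [0,∞) and U(r*) > 0, then r* ∈ (0, r_H) and r* satisfies the fixed point equation r* = m(r* + 3T + c). -/

import Mathlib

open MeasureTheory Set

/-- The cumulative distribution function of a distribution `μ` on `ℝ`. -/
noncomputable def cdfR (μ : Measure ℝ) (t : ℝ) : ℝ := (μ (Iic t)).toReal

/-- The mean residual lifetime function `m(t) = E[α − t ∣ α > t]` (with value `0` when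
`P(α > t) = 0`, using the junk-value convention `x / 0 = 0`). -/
noncomputable def mrl (μ : Measure ℝ) (t : ℝ) : ℝ :=
  (∫ x, max (x - t) 0 ∂μ) / (μ (Ioi t)).toReal

/-- If `r*` maximizes the supplier's expected payoff
`U(r) = (2/3)·r·E[(α − k − r)⁺]` over `[0,∞)` with `U(r*) > 0`, then `r* ∈ (0, r_H)` and
`r*` satisfies the fixed point equation `r* = m(r* + 3T + c)`. -/
theorem stmt8 (μ : Measure ℝ) [IsProbabilityMeasure μ]
    (hnonneg : μ (Iio 0) = 0) (hint : Integrable id μ) (hcont : ∀ t : ℝ, μ {t} = 0)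
    (T c : ℝ) (hT : 0 ≤ T) (hc : 0 ≤ c) (k : ℝ) (hk : k = 3*T + c)
    (rH : EReal) (hrH : rH = essSup (fun x : ℝ => (x : EReal)) μ - (k : EReal))
    (hrHpos : 0 < rH)
    (U : ℝ → ℝ) (hU : ∀ r : ℝ, U r = (2/3) * r * ∫ x, max (x - k - r) 0 ∂μ)
    (rstar : ℝ) (hr0 : 0 ≤ rstar) (hmax : ∀ r : ℝ, 0 ≤ r → U r ≤ U rstar)
    (hpos : 0 < U rstar) :
    (0 < rstar ∧ (rstar : EReal) < rH) ∧ rstar = mrl μ (rstar + (3*T + c)) := by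
  subst hk hrH
  set a := 3*T + c with ha
  have hInt : ∀ b : ℝ, Integrable (fun x => max (x - b) 0) μ := by
    intro b
    have : Integrable (fun x : ℝ => x - b) μ := hint.sub (integrable_const b)
    exact this.pos_part
  set g : ℝ → ℝ := fun r => ∫ x, max (x - (a + r)) 0 ∂μ with hg
  have hUg : ∀ r, U r = (2/3) * r * g r := by
    intro r
    rw [hU r, hg]
    congr 1
    refine integral_congr_ae (Filter.Eventually.of_forall fun x => ?_)
    show max (x - a - r) 0 = max (x - (a + r)) 0
    rw [show x - a - r = x - (a + r) by ring]
  set G := g rstar with hG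
  have hposG : 0 < (2/3) * rstar * G := by rw [← hUg]; exact hpos
  have hrpos : 0 < rstar := by
    rcases lt_or_eq_of_le hr0 with h | h
    · exact h
    · exfalso; rw [← h] at hposG; simp at hposG
  have hGpos : 0 < G := by nlinarith
  set t := a + rstar with hT2
  set s := (μ (Ioi t)).toReal with hs
  have hGt : G = ∫ x, max (x - t) 0 ∂μ := rfl
  have hμt : μ (Ioi t) ≠ 0 := by
    intro h0
    have hae : ∀ᵐ x ∂μ, max (x - t) 0 = 0 := by
      filter_upwards [measure_eq_zero_iff_ae_notMem.mp h0] with x hx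
      simp only [mem_Ioi, not_lt] at hx
      simp [max_eq_right, sub_nonpos.mpr hx]
    have : (∫ x, max (x - t) 0 ∂μ) = 0 := integral_eq_zero_of_ae hae
    rw [← hGt] at this; linarith
  have hspos : 0 < s := ENNReal.toReal_pos hμt (measure_ne_top μ _)
  have hIndInt : Integrable ((Ioi t).indicator (fun _ => (1:ℝ))) μ :=
    (integrable_const (1:ℝ)).indicator measurableSet_Ioi
  have hIndVal : (∫ x, (Ioi t).indicator (fun _ => (1:ℝ)) x ∂μ) = s := by
    rw [integral_indicator_const (1:ℝ) measurableSet_Ioi]; simp [hs, measureReal_def]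
  have gm1 : ∀ h : ℝ, 0 ≤ h → G - h * s ≤ g (rstar + h) := by
    intro h hh
    have hpt : ∀ x : ℝ, max (x - t) 0 - h * (Ioi t).indicator (fun _ => (1:ℝ)) x
        ≤ max (x - (a + (rstar + h))) 0 := by
      intro x
      by_cases hx : x ∈ Ioi t
      · rw [Set.indicator_of_mem hx]
        rw [mem_Ioi, hT2] at hx
        rw [max_eq_left (by linarith)]
        rcases le_total (x - (a + (rstar + h))) 0 with h1 | h1
        · rw [max_eq_right h1]; linarith
        · rw [max_eq_left h1]; linarith
      · rw [Set.indicator_of_notMem hx]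
        rw [mem_Ioi, not_lt, hT2] at hx
        rw [max_eq_right (by linarith), max_eq_right (by linarith)]
        linarith
    calc G - h * s
        = ∫ x, (max (x - t) 0 - h * (Ioi t).indicator (fun _ => (1:ℝ)) x) ∂μ := by
          rw [integral_sub (hInt t) (hIndInt.const_mul h), integral_const_mul h _, hIndVal, ← hGt]
      _ ≤ g (rstar + h) := integral_mono ((hInt t).sub (hIndInt.const_mul h)) (hInt _) hpt
  have gm2 : ∀ h : ℝ, 0 ≤ h → G + h * s ≤ g (rstar - h) := by
    intro h hh
    have hpt : ∀ x : ℝ, max (x - t) 0 + h * (Ioi t).indicator (fun _ => (1:ℝ)) x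
        ≤ max (x - (a + (rstar - h))) 0 := by
      intro x
      by_cases hx : x ∈ Ioi t
      · rw [Set.indicator_of_mem hx]
        rw [mem_Ioi, hT2] at hx
        rw [max_eq_left (by linarith), max_eq_left (by linarith)]
        linarith
      · rw [Set.indicator_of_notMem hx]
        rw [mem_Ioi, not_lt, hT2] at hx
        rw [max_eq_right (by linarith)]
        simp [le_max_iff]
    calc G + h * s
        = ∫ x, (max (x - t) 0 + h * (Ioi t).indicator (fun _ => (1:ℝ)) x) ∂μ := by
          rw [integral_add (hInt t) (hIndInt.const_mul h), integral_const_mul h _, hIndVal, ← hGt]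
      _ ≤ g (rstar - h) := integral_mono ((hInt t).add (hIndInt.const_mul h)) (hInt _) hpt
  have key1 : ∀ h : ℝ, 0 < h → G ≤ (rstar + h) * s := by
    intro h hh
    have hm := hmax (rstar + h) (by linarith)
    rw [hUg, hUg] at hm
    have h1 := gm1 h hh.le
    nlinarith [mul_le_mul_of_nonneg_left h1 (show (0:ℝ) ≤ rstar + h by linarith)]
  have key2 : ∀ h : ℝ, 0 < h → h < rstar → rstar * s ≤ G + h * s := by
    intro h hh hhr
    have hm := hmax (rstar - h) (by linarith)
    rw [hUg, hUg] at hm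
    have h1 := gm2 h hh.le
    nlinarith [mul_le_mul_of_nonneg_left h1 (show (0:ℝ) ≤ rstar - h by linarith)]
  have hGeq : G = rstar * s := by
    have le1 : G ≤ rstar * s := by
      apply le_of_forall_pos_le_add
      intro ε hε
      calc G ≤ (rstar + ε / s) * s := key1 (ε / s) (div_pos hε hspos)
        _ = rstar * s + ε := by field_simp
    have le2 : rstar * s ≤ G := by
      apply le_of_forall_pos_le_add
      intro ε hε
      set h := min (ε / s) (rstar / 2) with hh
      have hhpos : 0 < h := lt_min (div_pos hε hspos) (by linarith)
      have hhr : h < rstar := lt_of_le_of_lt (min_le_right _ _) (by linarith)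
      have hk2 := key2 h hhpos hhr
      have hhs : h * s ≤ ε := by
        have hle : h ≤ ε / s := min_le_left _ _
        calc h * s ≤ (ε / s) * s := by nlinarith
          _ = ε := by field_simp
      linarith
    linarith
  have hess : ((t : ℝ) : EReal) < essSup (fun x : ℝ => (x : EReal)) μ := by
    by_contra hco
    push_neg at hco
    have hae : ∀ᵐ x ∂μ, ((x : ℝ) : EReal) ≤ ((t : ℝ) : EReal) := by
      filter_upwards [ae_le_essSup (f := fun x : ℝ => (x : EReal)) (μ := μ)] with x hx
      exact le_trans hx hco
    have : μ (Ioi t) = 0 := by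
      rw [measure_eq_zero_iff_ae_notMem]
      filter_upwards [hae] with x hx
      simp only [mem_Ioi, not_lt]
      exact_mod_cast hx
    exact hμt this
  refine ⟨⟨hrpos, ?_⟩, ?_⟩
  · rw [EReal.lt_sub_iff_add_lt (Or.inl (EReal.coe_ne_bot a)) (Or.inl (EReal.coe_ne_top a))]
    have hco : ((rstar : ℝ) : EReal) + (a : EReal) = ((t : ℝ) : EReal) := by
      rw [hT2, ← EReal.coe_add, add_comm]
    rw [hco]
    exact hess
  · rw [show rstar + a = t by rw [hT2]; ring, mrl, ← hs, ← hGt, hGeq]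
    field_simp
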